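/- (Proposition 3.1(3)) Every Lie algebra automorphism τ of Vir has the form τ(L_α) = s·μ^α·L_{sα} for all α ∈ ℤ, for some uniquely determined μ ∈ F* and s ∈ {1, −1}; consequently Aut(Vir) ≅ F* ⋊ ℤ/2ℤ, where the nontrivial element of ℤ/2ℤ acts on F* by μ ↦ μ^{−1}. -/

import Mathlib

/-- The automorphism group of a Lie algebra, realized as the subgroup of linear
automorphisms preserving the Lie bracket. -/
def lieAutGroup (F B : Type*) [Field F] [LieRing B] [LieAlgebra F B] :
    Subgroup (B ≃ₗ[F] B) where
  carrier := {e | ∀ x y : B, e ⁅x, y⁆ = ⁅e x, e y⁆}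
  one_mem' := fun _ _ => rfl
  mul_mem' := fun {a b} ha hb x y => by
    show a (b ⁅x, y⁆) = ⁅a (b x), a (b y)⁆
    rw [hb, ha]
  inv_mem' := fun {a} ha x y => by
    show a.symm ⁅x, y⁆ = ⁅a.symm x, a.symm y⁆
    apply a.injective
    rw [ha, a.apply_symm_apply, a.apply_symm_apply, a.apply_symm_apply]

/-- Inversion as an automorphism of the commutative group `Fˣ`. -/
def unitsInvAut (F : Type*) [Field F] : MulAut Fˣ := MulEquiv.inv Fˣ

lemma unitsInvAut_sq (F : Type*) [Field F] : (unitsInvAut F) ^ 2 = 1 := by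
  ext u
  simp [unitsInvAut, sq]

/-- The action of `ℤ/2ℤ` on `F*` in which the nontrivial element acts by `μ ↦ μ⁻¹`. -/
def invAction (F : Type*) [Field F] : Multiplicative (ZMod 2) →* MulAut Fˣ where
  toFun z := (unitsInvAut F) ^ (z.toAdd.val)
  map_one' := by simp
  map_mul' x y := by
    show (unitsInvAut F) ^ ((x.toAdd + y.toAdd).val) = _
    rw [ZMod.val_add, ← pow_eq_pow_mod _ (unitsInvAut_sq F), pow_add]

section Vir

variable {F : Type*} [Field F] [CharZero F]
  {V : Type*} [LieRing V] [LieAlgebra F V]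
  (L : Module.Basis ℤ F V)
  (hL : ∀ α β : ℤ, ⁅L α, L β⁆ = ((β - α : ℤ) : F) • L (α + β))

/-- Right bracket as a linear map. -/
def virRB {F : Type*} [Field F] {V : Type*} [LieRing V] [LieAlgebra F V] (w : V) :
    V →ₗ[F] V where
  toFun x := ⁅x, w⁆
  map_add' x y := add_lie x y w
  map_smul' c x := smul_lie c x w

include hL

lemma vir_repr_bracket_basis (β : ℤ) (w : V) (k : ℤ) :
    L.repr ⁅L β, w⁆ k = ((k - 2*β : ℤ) : F) * L.repr w (k - β) := by
  let f : V →ₗ[F] F :=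
    (Finsupp.lapply k).comp ((L.repr : V →ₗ[F] (ℤ →₀ F)).comp (LieAlgebra.ad F V (L β)))
  let g : V →ₗ[F] F :=
    ((k - 2*β : ℤ) : F) • ((Finsupp.lapply (k - β)).comp (L.repr : V →ₗ[F] (ℤ →₀ F)))
  have hfg : f = g := by
    apply Module.Basis.ext L
    intro γ
    show L.repr ⁅L β, L γ⁆ k = ((k - 2*β : ℤ) : F) • L.repr (L γ) (k - β)
    rw [hL, map_smul, L.repr_self, L.repr_self]
    rw [Finsupp.smul_apply, Finsupp.single_apply, Finsupp.single_apply]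
    by_cases h : β + γ = k
    · rw [if_pos h, if_pos (by omega)]
      have h2 : γ - β = k - 2*β := by omega
      rw [h2]
    · rw [if_neg h, if_neg (by omega)]; simp
  have := LinearMap.congr_fun hfg w
  simpa [f, g] using this

lemma vir_repr_bracket (x w : V) (k : ℤ) :
    L.repr ⁅x, w⁆ k
      = ∑ β ∈ (L.repr x).support,
          L.repr x β * (((k - 2*β : ℤ) : F) * L.repr w (k - β)) := by
  conv_lhs => rw [← L.linearCombination_repr x]
  rw [Finsupp.linearCombination_apply, Finsupp.sum]
  have hs : ⁅∑ a ∈ (L.repr x).support, (L.repr x) a • L a, w⁆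
      = ∑ a ∈ (L.repr x).support, ⁅(L.repr x) a • L a, w⁆ :=
    map_sum (virRB (F := F) w) _ _
  rw [hs, map_sum, Finset.sum_apply']
  refine Finset.sum_congr rfl fun β hβ => ?_
  rw [smul_lie, map_smul, Finsupp.smul_apply, vir_repr_bracket_basis L hL, smul_eq_mul]

end Vir
-- continuing; appended to a.lean content for test
section Vir2
set_option linter.unusedSectionVars false

variable {F : Type*} [Field F] [CharZero F]
  {V : Type*} [LieRing V] [LieAlgebra F V]
  (L : Module.Basis ℤ F V)
  (hL : ∀ α β : ℤ, ⁅L α, L β⁆ = ((β - α : ℤ) : F) • L (α + β))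

include hL

lemma vir_supp_nonempty (x : V) (hx : x ≠ 0) : (L.repr x).support.Nonempty := by
  rw [Finsupp.support_nonempty_iff]
  simpa using hx

lemma vir_top_degree (x w : V) (hw : w ≠ 0) (a : F) (heig : ⁅x, w⁆ = a • w)
    (hcx : (L.repr x).support.Nonempty) (hN : 0 < (L.repr x).support.max' hcx) :
    (L.repr w).support.max' (vir_supp_nonempty L hL w hw) = (L.repr x).support.max' hcx := by
  set N := (L.repr x).support.max' hcx with hNdef
  set hw' := vir_supp_nonempty L hL w hw
  set n := (L.repr w).support.max' hw' with hndef
  have key := vir_repr_bracket L hL x w (N + n)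
  have hdn : L.repr w (N + n) = 0 := by
    by_contra h
    have : N + n ∈ (L.repr w).support := Finsupp.mem_support_iff.mpr h
    have := (L.repr w).support.le_max' _ this
    omega
  have hL0 : L.repr ⁅x, w⁆ (N + n) = 0 := by
    rw [heig, map_smul, Finsupp.smul_apply, hdn, smul_zero]
  rw [hL0] at key
  have hsum : ∑ β ∈ (L.repr x).support,
      L.repr x β * (((N + n - 2*β : ℤ) : F) * L.repr w (N + n - β))
      = L.repr x N * (((n - N : ℤ) : F) * L.repr w n) := by
    rw [Finset.sum_eq_single_of_mem N ((L.repr x).support.max'_mem hcx)]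
    · have e1 : N + n - 2*N = n - N := by ring
      have e2 : N + n - N = n := by ring
      rw [e1, e2]
    · intro β hβ hβN
      have hβle : β ≤ N := (L.repr x).support.le_max' _ hβ
      have : L.repr w (N + n - β) = 0 := by
        by_contra h
        have hmem : N + n - β ∈ (L.repr w).support := Finsupp.mem_support_iff.mpr h
        have := (L.repr w).support.le_max' _ hmem
        omega
      rw [this]; ring
  rw [hsum] at key
  have hcN : L.repr x N ≠ 0 := Finsupp.mem_support_iff.mp ((L.repr x).support.max'_mem hcx)
  have hdn' : L.repr w n ≠ 0 := Finsupp.mem_support_iff.mp ((L.repr w).support.max'_mem hw')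
  have : ((n - N : ℤ) : F) = 0 := by
    by_contra h
    exact (mul_ne_zero hcN (mul_ne_zero h hdn')) key.symm
  have : (n : ℤ) - N = 0 := by exact_mod_cast this
  omega

lemma vir_bot_degree (x w : V) (hw : w ≠ 0) (a : F) (heig : ⁅x, w⁆ = a • w)
    (hcx : (L.repr x).support.Nonempty) (hM : (L.repr x).support.min' hcx < 0) :
    (L.repr w).support.min' (vir_supp_nonempty L hL w hw) = (L.repr x).support.min' hcx := by
  set M := (L.repr x).support.min' hcx with hMdef
  set hw' := vir_supp_nonempty L hL w hw
  set m := (L.repr w).support.min' hw' with hmdef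
  have key := vir_repr_bracket L hL x w (M + m)
  have hdn : L.repr w (M + m) = 0 := by
    by_contra h
    have : M + m ∈ (L.repr w).support := Finsupp.mem_support_iff.mpr h
    have := (L.repr w).support.min'_le _ this
    omega
  have hL0 : L.repr ⁅x, w⁆ (M + m) = 0 := by
    rw [heig, map_smul, Finsupp.smul_apply, hdn, smul_zero]
  rw [hL0] at key
  have hsum : ∑ β ∈ (L.repr x).support,
      L.repr x β * (((M + m - 2*β : ℤ) : F) * L.repr w (M + m - β))
      = L.repr x M * (((m - M : ℤ) : F) * L.repr w m) := by
    rw [Finset.sum_eq_single_of_mem M ((L.repr x).support.min'_mem hcx)]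
    · have e1 : M + m - 2*M = m - M := by ring
      have e2 : M + m - M = m := by ring
      rw [e1, e2]
    · intro β hβ hβM
      have hβge : M ≤ β := (L.repr x).support.min'_le _ hβ
      have : L.repr w (M + m - β) = 0 := by
        by_contra h
        have hmem : M + m - β ∈ (L.repr w).support := Finsupp.mem_support_iff.mpr h
        have := (L.repr w).support.min'_le _ hmem
        omega
      rw [this]; ring
  rw [hsum] at key
  have hcM : L.repr x M ≠ 0 := Finsupp.mem_support_iff.mp ((L.repr x).support.min'_mem hcx)
  have hdm' : L.repr w m ≠ 0 := Finsupp.mem_support_iff.mp ((L.repr w).support.min'_mem hw')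
  have : ((m - M : ℤ) : F) = 0 := by
    by_contra h
    exact (mul_ne_zero hcM (mul_ne_zero h hdm')) key.symm
  have : (m : ℤ) - M = 0 := by exact_mod_cast this
  omega

end Vir2
section Vir3
set_option linter.unusedSectionVars false

variable {F : Type*} [Field F] [CharZero F]
  {V : Type*} [LieRing V] [LieAlgebra F V]
  (L : Module.Basis ℤ F V)
  (hL : ∀ α β : ℤ, ⁅L α, L β⁆ = ((β - α : ℤ) : F) • L (α + β))

include hL

/-- Any element whose adjoint action has eigenvectors of all integer eigenvalues spanning V
is a multiple of `L 0`. -/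
lemma vir_diag (x : V) (hx : x ≠ 0)
    (w : ℤ → V) (hw0 : ∀ α, w α ≠ 0)
    (heig : ∀ α : ℤ, ⁅x, w α⁆ = (α : F) • w α)
    (hspan : Submodule.span F (Set.range w) = ⊤) :
    x = (L.repr x 0) • L 0 ∧ L.repr x 0 ≠ 0 := by
  have hcx : (L.repr x).support.Nonempty := vir_supp_nonempty L hL x hx
  -- the maximum of the support is ≤ 0
  have hNle : (L.repr x).support.max' hcx ≤ 0 := by
    by_contra hN
    push_neg at hN
    set N := (L.repr x).support.max' hcx with hNdef
    -- every w α has top degree N, hence coord (N+1) kills everything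
    have hcoord : (L.coord (N + 1) : V →ₗ[F] F) = 0 := by
      apply LinearMap.ext_on hspan
      rintro v ⟨α, rfl⟩
      have htop := vir_top_degree L hL x (w α) (hw0 α) (α : F) (heig α) hcx hN
      show L.repr (w α) (N + 1) = 0
      by_contra h
      have hmem : N + 1 ∈ (L.repr (w α)).support := Finsupp.mem_support_iff.mpr h
      have := (L.repr (w α)).support.le_max' _ hmem
      omega
    have := LinearMap.congr_fun hcoord (L (N + 1))
    rw [L.coord_apply, L.repr_self] at this
    simp at this
  -- the minimum of the support is ≥ 0
  have hMge : 0 ≤ (L.repr x).support.min' hcx := by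
    by_contra hM
    push_neg at hM
    set M := (L.repr x).support.min' hcx with hMdef
    have hcoord : (L.coord (M - 1) : V →ₗ[F] F) = 0 := by
      apply LinearMap.ext_on hspan
      rintro v ⟨α, rfl⟩
      have hbot := vir_bot_degree L hL x (w α) (hw0 α) (α : F) (heig α) hcx hM
      show L.repr (w α) (M - 1) = 0
      by_contra h
      have hmem : M - 1 ∈ (L.repr (w α)).support := Finsupp.mem_support_iff.mpr h
      have := (L.repr (w α)).support.min'_le _ hmem
      omega
    have := LinearMap.congr_fun hcoord (L (M - 1))
    rw [L.coord_apply, L.repr_self] at this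
    simp at this
  -- hence the support is {0}
  have hsupp : ∀ k : ℤ, k ≠ 0 → L.repr x k = 0 := by
    intro k hk
    by_contra h
    have hmem : k ∈ (L.repr x).support := Finsupp.mem_support_iff.mpr h
    have h1 := (L.repr x).support.le_max' _ hmem
    have h2 := (L.repr x).support.min'_le _ hmem
    omega
  have h0 : L.repr x 0 ≠ 0 := by
    intro h
    have : L.repr x = 0 := by
      ext k
      by_cases hk : k = 0
      · rw [hk, h]; rfl
      · exact hsupp k hk
    exact hx (by simpa using congrArg L.repr.symm this)
  refine ⟨?_, h0⟩
  apply L.repr.injective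
  rw [map_smul, L.repr_self]
  ext k
  rw [Finsupp.smul_apply, Finsupp.single_apply]
  by_cases hk : k = 0
  · subst hk; simp
  · rw [if_neg (Ne.symm hk), smul_zero, hsupp k hk]

/-- Eigenvectors of `ad (L 0)` are multiples of basis vectors. -/
lemma vir_eig_L0 (w : V) (hw : w ≠ 0) (a : F) (heig : ⁅L 0, w⁆ = a • w) :
    ∃ γ : ℤ, a = (γ : F) ∧ w = (L.repr w γ) • L γ ∧ L.repr w γ ≠ 0 := by
  have key : ∀ k : ℤ, a * L.repr w k = (k : F) * L.repr w k := by
    intro k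
    have h := vir_repr_bracket_basis L hL 0 w k
    rw [heig, map_smul, Finsupp.smul_apply] at h
    simpa using h
  have hsupp : (L.repr w).support.Nonempty := vir_supp_nonempty L hL w hw
  obtain ⟨γ, hγ⟩ := hsupp
  have hγ0 : L.repr w γ ≠ 0 := Finsupp.mem_support_iff.mp hγ
  have ha : a = (γ : F) := by
    have := key γ
    rcases mul_eq_mul_right_iff.mp this with h | h
    · exact h
    · exact absurd h hγ0
  refine ⟨γ, ha, ?_, hγ0⟩
  have hother : ∀ k : ℤ, k ≠ γ → L.repr w k = 0 := by
    intro k hk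
    by_contra h
    have := key k
    rw [ha] at this
    rcases mul_eq_mul_right_iff.mp this with h2 | h2
    · exact hk (by exact_mod_cast h2.symm)
    · exact h h2
  apply L.repr.injective
  rw [map_smul, L.repr_self]
  ext k
  rw [Finsupp.smul_apply, Finsupp.single_apply]
  by_cases hk : k = γ
  · subst hk; simp
  · rw [if_neg (Ne.symm hk), smul_zero, hother k hk]

end Vir3
section Vir4
set_option linter.unusedSectionVars false

variable {F : Type*} [Field F] [CharZero F]
  {V : Type*} [LieRing V] [LieAlgebra F V]
  (L : Module.Basis ℤ F V)
  (hL : ∀ α β : ℤ, ⁅L α, L β⁆ = ((β - α : ℤ) : F) • L (α + β))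

lemma vir_smul_basis {a b : F} {i j : ℤ} (ha : a ≠ 0) (h : a • L i = b • L j) :
    i = j ∧ a = b := by
  by_cases hij : i = j
  · subst hij
    exact ⟨rfl, smul_left_injective F (L.ne_zero i) h⟩
  · exfalso
    have h1 := congrArg (fun v => L.repr v i) h
    simp [Finsupp.single_apply, Ne.symm hij] at h1
    exact ha h1

include hL

lemma vir_exists (τ : V ≃ₗ[F] V) (hτ : ∀ x y : V, τ ⁅x, y⁆ = ⁅τ x, τ y⁆) :
    ∃ (μ : F) (s : ℤ), μ ≠ 0 ∧ (s = 1 ∨ s = -1) ∧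
      ∀ α : ℤ, τ (L α) = ((s : F) * μ ^ α) • L (s * α) := by
  set w : ℤ → V := fun α => τ (L α) with hw
  have hw0 : ∀ α, w α ≠ 0 := fun α => by
    simp only [hw, ne_eq, LinearEquiv.map_eq_zero_iff]
    exact L.ne_zero α
  have heig : ∀ α : ℤ, ⁅τ (L 0), w α⁆ = (α : F) • w α := by
    intro α
    show ⁅τ (L 0), τ (L α)⁆ = (α : F) • τ (L α)
    rw [← hτ, hL 0 α, map_smul]
    norm_num
  have hspan : Submodule.span F (Set.range w) = ⊤ := by
    rw [show w = ⇑(L.map τ) from funext fun α => (L.map_apply τ α).symm]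
    exact (L.map τ).span_eq
  have hx0 : τ (L 0) ≠ 0 := hw0 0
  obtain ⟨hxeq, hc0⟩ := vir_diag L hL (τ (L 0)) hx0 w hw0 heig hspan
  set c : F := L.repr (τ (L 0)) 0 with hcdef
  have heigL0 : ∀ α : ℤ, ⁅L 0, w α⁆ = (c⁻¹ * (α : F)) • w α := by
    intro α
    have h1 := heig α
    rw [hxeq, smul_lie] at h1
    have h2 := congrArg (fun v => c⁻¹ • v) h1
    simp only [smul_smul, inv_mul_cancel₀ hc0, one_smul] at h2
    rw [h2]
  choose γ hγa hweq hdne using fun α => vir_eig_L0 L hL (w α) (hw0 α) _ (heigL0 α)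
  set s : ℤ := γ 1 with hsdef
  have hcinv : c⁻¹ = (s : F) := by simpa using hγa 1
  have hcs : c * (s : F) = 1 := by rw [← hcinv, mul_inv_cancel₀ hc0]
  have hγ : ∀ α : ℤ, γ α = s * α := by
    intro α
    have h1 : c⁻¹ * (α : F) = (γ α : F) := hγa α
    rw [hcinv] at h1
    exact_mod_cast h1.symm
  have hs1 : s = 1 ∨ s = -1 := by
    by_contra hs
    push_neg at hs
    have hcoord : (L.coord 1 : V →ₗ[F] F) = 0 := by
      apply LinearMap.ext_on hspan
      rintro v ⟨α, rfl⟩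
      show L.repr (w α) 1 = 0
      conv_lhs => rw [hweq α]
      rw [map_smul, L.repr_self, Finsupp.smul_apply, Finsupp.single_apply]
      have hne : γ α ≠ 1 := by
        rw [hγ α]
        intro h
        rcases Int.eq_one_or_neg_one_of_mul_eq_one' h with ⟨h1, _⟩ | ⟨h1, _⟩
        · exact hs.1 h1
        · exact hs.2 h1
      rw [if_neg hne, smul_zero]
    have hcontra := LinearMap.congr_fun hcoord (L 1)
    rw [L.coord_apply, L.repr_self] at hcontra
    simp at hcontra
  have hss : (s : F) * (s : F) = 1 := by
    rcases hs1 with h | h <;> rw [h] <;> norm_num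
  have hsF0 : (s : F) ≠ 0 := by
    rcases hs1 with h | h <;> rw [h] <;> norm_num
  have hceq : c = (s : F) := by
    have h1 : c * (s : F) * (s : F) = (s : F) := by rw [hcs, one_mul]
    rwa [mul_assoc, hss, mul_one] at h1
  set d : ℤ → F := fun α => L.repr (w α) (γ α) with hddef
  have hwL : ∀ α : ℤ, w α = d α • L (s * α) := by
    intro α; rw [show s * α = γ α from (hγ α).symm]; exact hweq α
  have hd0 : ∀ α, d α ≠ 0 := hdne
  have hmul : ∀ α β : ℤ, α ≠ β → d (α + β) = (s : F) * (d α * d β) := by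
    intro α β hne
    have h1 : τ ⁅L α, L β⁆ = ((β - α : ℤ) : F) • (d (α + β) • L (s * (α + β))) := by
      rw [hL, map_smul]
      exact congrArg _ (hwL (α + β))
    have h2 : τ ⁅L α, L β⁆
        = (d α * d β * ((s * (β - α) : ℤ) : F)) • L (s * (α + β)) := by
      rw [hτ]
      have e1 : τ (L α) = d α • L (s * α) := hwL α
      have e2 : τ (L β) = d β • L (s * β) := hwL β
      rw [e1, e2, smul_lie, lie_smul, hL, smul_smul, smul_smul]
      congr 2
      · ring
      · ring
    rw [h1] at h2
    rw [smul_smul] at h2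
    have hcoef : ((β - α : ℤ) : F) * d (α + β)
        = d α * d β * ((s * (β - α) : ℤ) : F) :=
      smul_left_injective F (L.ne_zero (s * (α + β))) h2
    have hba : ((β - α : ℤ) : F) ≠ 0 := by
      rw [Int.cast_ne_zero]; omega
    have hfin : ((β - α : ℤ) : F) * d (α + β)
        = ((β - α : ℤ) : F) * ((s : F) * (d α * d β)) := by
      rw [hcoef]; push_cast; ring
    exact mul_left_cancel₀ hba hfin
  have hd0s : d 0 = (s : F) := by
    have h1 : w 0 = d 0 • L 0 := by simpa using hwL 0
    have h2 : d 0 • L 0 = c • L 0 := by rw [← h1]; exact hxeq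
    rw [smul_left_injective F (L.ne_zero 0) h2, hceq]
  set μ : F := (s : F) * d 1 with hμdef
  have hμ0 : μ ≠ 0 := mul_ne_zero hsF0 (hd0 1)
  set e : ℤ → F := fun α => (s : F) * d α with hedef
  have hemul : ∀ α β : ℤ, α ≠ β → e (α + β) = e α * e β := by
    intro α β hne
    show (s : F) * d (α + β) = ((s : F) * d α) * ((s : F) * d β)
    rw [hmul α β hne,
      show ((s : F) * d α) * ((s : F) * d β) = ((s : F) * (s : F)) * (d α * d β) from by
        ring,
      hss, one_mul, ← mul_assoc, hss, one_mul]
  have he0 : e 0 = 1 := by show (s : F) * d 0 = 1; rw [hd0s, hss]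
  have he1 : e 1 = μ := rfl
  have heneg1 : e (-1) = μ⁻¹ := by
    have h := hemul 1 (-1) (by norm_num)
    norm_num at h
    rw [he0, he1] at h
    field_simp
    rw [mul_comm]
    exact h.symm
  have he2 : e 2 = μ * μ := by
    have h := hemul 2 (-1) (by norm_num)
    norm_num at h
    rw [he1, heneg1] at h
    field_simp at h
    exact h.symm.trans (sq μ)
  have hepow : ∀ α : ℤ, e α = μ ^ α := by
    intro α
    induction α using Int.induction_on with
    | zero => simpa using he0
    | succ i ih =>
        by_cases hi : (i : ℤ) = 1
        · rw [hi, show ((1 : ℤ) + 1) = 2 from rfl, he2]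
          rw [show (2 : ℤ) = 1 + 1 from rfl, zpow_add_one₀ hμ0, zpow_one]
        · have h := hemul i 1 hi
          rw [he1, ih] at h
          rw [h, zpow_add_one₀ hμ0]
    | pred i ih =>
        by_cases hi : (i : ℤ) = 1
        · have h := hemul (-2) 1 (by norm_num)
          norm_num at h
          rw [he1, heneg1] at h
          have h2 : e (-2) = μ⁻¹ * μ⁻¹ := by
            field_simp at h ⊢
            rw [← mul_assoc]
            exact (mul_assoc _ _ _).trans h.symm
          rw [show -(i : ℤ) - 1 = -2 by omega, h2]
          rw [show (-2 : ℤ) = -(2 : ℤ) from rfl, zpow_neg,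
            show (2 : ℤ) = 1 + 1 from rfl, zpow_add_one₀ hμ0, zpow_one]
          exact (mul_inv μ μ).symm
        · have h := hemul (-(i : ℤ)) (-1) (by omega)
          rw [heneg1, ih] at h
          rw [show -(i : ℤ) + -1 = -(i : ℤ) - 1 by ring] at h
          rw [h, zpow_sub_one₀ hμ0]
  refine ⟨μ, s, hμ0, hs1, ?_⟩
  intro α
  have hdα : d α = (s : F) * μ ^ α := by
    have h : (s : F) * d α = μ ^ α := hepow α
    calc d α = ((s : F) * (s : F)) * d α := by rw [hss, one_mul]
    _ = (s : F) * ((s : F) * d α) := by ring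
    _ = (s : F) * μ ^ α := by rw [h]
  rw [show τ (L α) = w α from rfl, hwL α, hdα]

end Vir4
section Vir5
set_option linter.unusedSectionVars false

variable {F : Type*} [Field F] [CharZero F]
  {V : Type*} [LieRing V] [LieAlgebra F V]
  (L : Module.Basis ℤ F V)
  (hL : ∀ α β : ℤ, ⁅L α, L β⁆ = ((β - α : ℤ) : F) • L (α + β))

lemma vir_lequiv_ext {e f : V ≃ₗ[F] V} (h : ∀ α, e (L α) = f (L α)) : e = f :=
  LinearEquiv.toLinearMap_injective (Module.Basis.ext L h)

lemma vir_val_cases (z : Multiplicative (ZMod 2)) : z.toAdd.val = 0 ∨ z.toAdd.val = 1 := by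
  have := ZMod.val_lt (z.toAdd)
  omega

lemma vir_mul_apply (e f : V ≃ₗ[F] V) (x : V) : (e * f) x = e (f x) := rfl

/-- The candidate automorphism `L α ↦ (s μ^(sα)) • L (s α)`. -/
noncomputable def virTe (μ : F) (hμ : μ ≠ 0) (s : ℤ) (hs : s * s = 1) : V ≃ₗ[F] V :=
  LinearEquiv.ofLinear
    (L.constr F fun α => ((s : F) * μ ^ (s * α)) • L (s * α))
    (L.constr F fun α => ((s : F) * μ ^ (-α)) • L (s * α))
    (by
      apply Module.Basis.ext L
      intro α
      rw [LinearMap.comp_apply, Module.Basis.constr_basis, map_smul, Module.Basis.constr_basis,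
        LinearMap.id_apply, smul_smul]
      have h1 : s * (s * α) = α := by rw [← mul_assoc, hs, one_mul]
      rw [h1]
      have hss : (s : F) * (s : F) = 1 := by
        have h3 : ((s * s : ℤ) : F) = ((1 : ℤ) : F) := by rw [hs]
        push_cast at h3; exact h3
      have hcoef : (s : F) * μ ^ (-α) * ((s : F) * μ ^ α) = 1 := by
        rw [show (s : F) * μ ^ (-α) * ((s : F) * μ ^ α)
            = ((s : F) * (s : F)) * (μ ^ (-α) * μ ^ α) from by ring, hss,
          ← zpow_add₀ hμ]
        norm_num
      rw [hcoef, one_smul])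
    (by
      apply Module.Basis.ext L
      intro α
      rw [LinearMap.comp_apply, Module.Basis.constr_basis, map_smul, Module.Basis.constr_basis,
        LinearMap.id_apply, smul_smul]
      have h1 : s * (s * α) = α := by rw [← mul_assoc, hs, one_mul]
      rw [h1]
      have hss : (s : F) * (s : F) = 1 := by
        have h3 : ((s * s : ℤ) : F) = ((1 : ℤ) : F) := by rw [hs]
        push_cast at h3; exact h3
      have hcoef : (s : F) * μ ^ (s * α) * ((s : F) * μ ^ (-(s * α))) = 1 := by
        rw [show (s : F) * μ ^ (s * α) * ((s : F) * μ ^ (-(s * α)))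
            = ((s : F) * (s : F)) * (μ ^ (s * α) * μ ^ (-(s * α))) from by ring, hss,
          ← zpow_add₀ hμ]
        norm_num
      rw [hcoef, one_smul])

@[simp] lemma virTe_apply (μ : F) (hμ : μ ≠ 0) (s : ℤ) (hs : s * s = 1) (α : ℤ) :
    virTe L μ hμ s hs (L α) = ((s : F) * μ ^ (s * α)) • L (s * α) :=
  Module.Basis.constr_basis L F _ α

/-- The diagonal linear automorphism. -/
noncomputable def virDe (u : Fˣ) : V ≃ₗ[F] V :=
  virTe L (u : F) u.ne_zero 1 (mul_one 1)

lemma virDe_apply (u : Fˣ) (α : ℤ) : virDe L u (L α) = ((u : F) ^ α) • L α := by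
  rw [virDe, virTe_apply]
  norm_num

/-- The flip linear automorphism. -/
noncomputable def virSe : V ≃ₗ[F] V :=
  virTe L 1 one_ne_zero (-1) (by norm_num)

lemma virSe_apply (α : ℤ) : virSe L (L α) = -L (-α) := by
  rw [virSe, virTe_apply]
  simp

include hL

lemma virTe_mem (μ : F) (hμ : μ ≠ 0) (s : ℤ) (hs : s * s = 1) :
    virTe L μ hμ s hs ∈ lieAutGroup F V := by
  set T := virTe L μ hμ s hs with hT
  have hss : (s : F) * (s : F) = 1 := by
    have h3 : ((s * s : ℤ) : F) = ((1 : ℤ) : F) := by rw [hs]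
    push_cast at h3; exact h3
  have key : ∀ α β : ℤ, T ⁅L α, L β⁆ = ⁅T (L α), T (L β)⁆ := by
    intro α β
    rw [hL, map_smul, hT, virTe_apply, virTe_apply, virTe_apply, smul_lie, lie_smul, hL,
      smul_smul, smul_smul, smul_smul]
    have hidx : s * α + s * β = s * (α + β) := by ring
    rw [hidx]
    congr 1
    have hzp : μ ^ (s * α) * μ ^ (s * β) = μ ^ (s * (α + β)) := by
      rw [← zpow_add₀ hμ, show s * α + s * β = s * (α + β) from by ring]
    push_cast
    calc ((β : F) - α) * ((s : F) * μ ^ (s * (α + β)))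
        = ((s : F) * ((β : F) - α)) * μ ^ (s * (α + β)) := by ring
      _ = (s : F) * μ ^ (s * α) * ((s : F) * μ ^ (s * β))
            * ((s : F) * (β : F) - (s : F) * (α : F)) := by
          rw [← hzp]
          rw [show (s : F) * μ ^ (s * α) * ((s : F) * μ ^ (s * β))
              * ((s : F) * (β : F) - (s : F) * (α : F))
              = ((s : F) * (s : F)) * ((s : F) * (((β : F) - α))
                * (μ ^ (s * α) * μ ^ (s * β))) from by ring, hss, one_mul]
  have step1 : ∀ (α : ℤ) (y : V), T ⁅L α, y⁆ = ⁅T (L α), T y⁆ := by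
    intro α
    have heq : (T.toLinearMap ∘ₗ (LieAlgebra.ad F V (L α)))
        = (LieAlgebra.ad F V (T (L α))) ∘ₗ T.toLinearMap := by
      apply Module.Basis.ext L
      intro β
      simpa using key α β
    intro y
    simpa using LinearMap.congr_fun heq y
  intro x y
  have heq : (T.toLinearMap ∘ₗ (virRB (F := F) y))
      = (virRB (F := F) (T y)) ∘ₗ T.toLinearMap := by
    apply Module.Basis.ext L
    intro α
    simpa [virRB] using step1 α y
  simpa [virRB] using LinearMap.congr_fun heq x

lemma virDe_mem (u : Fˣ) : virDe L u ∈ lieAutGroup F V :=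
  virTe_mem L hL _ _ _ _

lemma virSe_mem : (virSe L : V ≃ₗ[F] V) ∈ lieAutGroup F V :=
  virTe_mem L hL _ _ _ _

/-- The diagonal part `Fˣ →* Aut`. -/
noncomputable def virD : Fˣ →* lieAutGroup F V where
  toFun u := ⟨virDe L u, virDe_mem L hL u⟩
  map_one' := by
    apply Subtype.ext
    apply vir_lequiv_ext L
    intro α
    show virDe L 1 (L α) = (1 : V ≃ₗ[F] V) (L α)
    rw [virDe_apply]
    simp
  map_mul' u v := by
    apply Subtype.ext
    apply vir_lequiv_ext L
    intro α
    show virDe L (u * v) (L α) = (virDe L u * virDe L v) (L α)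
    rw [vir_mul_apply, virDe_apply, virDe_apply, map_smul, virDe_apply, smul_smul]
    congr 1
    push_cast
    rw [mul_zpow]
    ring

lemma virD_apply (u : Fˣ) (α : ℤ) :
    ((virD L hL u : lieAutGroup F V) : V ≃ₗ[F] V) (L α) = ((u : F) ^ α) • L α :=
  virDe_apply L u α

/-- The flip automorphism as an element of the automorphism group. -/
noncomputable def virSig : lieAutGroup F V :=
  ⟨virSe L, virSe_mem L hL⟩

lemma virSig_apply (α : ℤ) :
    ((virSig L hL : lieAutGroup F V) : V ≃ₗ[F] V) (L α) = -L (-α) :=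
  virSe_apply L α

lemma virSig_sq : (virSig L hL) * (virSig L hL) = 1 := by
  apply Subtype.ext
  apply vir_lequiv_ext L
  intro α
  show (virSe L * virSe L : V ≃ₗ[F] V) (L α) = (1 : V ≃ₗ[F] V) (L α)
  rw [vir_mul_apply, virSe_apply, map_neg, virSe_apply]
  simp

lemma virSig_sq' : (virSig L hL) ^ 2 = 1 := by
  rw [sq]; exact virSig_sq L hL

/-- The `ℤ/2ℤ` part. -/
noncomputable def virS : Multiplicative (ZMod 2) →* lieAutGroup F V where
  toFun z := (virSig L hL) ^ (z.toAdd.val)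
  map_one' := by simp
  map_mul' x y := by
    show (virSig L hL) ^ ((x.toAdd + y.toAdd).val) = _
    rw [ZMod.val_add, ← pow_eq_pow_mod _ (virSig_sq' L hL), pow_add]

lemma vir_lift_cond : ∀ z : Multiplicative (ZMod 2),
    (virD L hL).comp ((invAction F z).toMonoidHom)
      = (MulAut.conj (virS L hL z)).toMonoidHom.comp (virD L hL) := by
  intro z
  refine MonoidHom.ext fun u => ?_
  show virD L hL ((invAction F z) u) = virS L hL z * virD L hL u * (virS L hL z)⁻¹
  rcases vir_val_cases z with hv | hv
  · have h1 : invAction F z u = u := by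
      show ((unitsInvAut F) ^ (z.toAdd.val)) u = u
      rw [hv, pow_zero]; rfl
    have h2 : virS L hL z = 1 := by
      show (virSig L hL) ^ (z.toAdd.val) = 1
      rw [hv, pow_zero]
    rw [h1, h2]
    group
  · have h1 : invAction F z u = u⁻¹ := by
      show ((unitsInvAut F) ^ (z.toAdd.val)) u = u⁻¹
      rw [hv, pow_one]; rfl
    have h2 : virS L hL z = virSig L hL := by
      show (virSig L hL) ^ (z.toAdd.val) = _
      rw [hv, pow_one]
    have hinv : (virSig L hL)⁻¹ = virSig L hL :=
      inv_eq_of_mul_eq_one_right (virSig_sq L hL)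
    rw [h1, h2, hinv]
    apply Subtype.ext
    apply vir_lequiv_ext L
    intro α
    show virDe L u⁻¹ (L α) = (virSe L * virDe L u * virSe L : V ≃ₗ[F] V) (L α)
    rw [vir_mul_apply, vir_mul_apply, virSe_apply, map_neg, map_neg, virDe_apply, virDe_apply,
      map_smul, virSe_apply]
    simp only [smul_neg, neg_neg]
    congr 1
    rw [zpow_neg, ← inv_zpow]
    push_cast
    ring

end Vir5
section Vir6
set_option linter.unusedSectionVars false

variable {F : Type*} [Field F] [CharZero F]
  {V : Type*} [LieRing V] [LieAlgebra F V]
  (L : Module.Basis ℤ F V)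
  (hL : ∀ α β : ℤ, ⁅L α, L β⁆ = ((β - α : ℤ) : F) • L (α + β))

include hL

/-- The homomorphism from the semidirect product to the automorphism group. -/
noncomputable def virPhi : (Fˣ ⋊[invAction F] Multiplicative (ZMod 2)) →* lieAutGroup F V :=
  SemidirectProduct.lift (virD L hL) (virS L hL) (vir_lift_cond L hL)

lemma virPhi_mk (u : Fˣ) (z : Multiplicative (ZMod 2)) :
    virPhi L hL ⟨u, z⟩ = virD L hL u * virS L hL z := by
  rw [SemidirectProduct.mk_eq_inl_mul_inr, map_mul, virPhi,
    SemidirectProduct.lift_inl, SemidirectProduct.lift_inr]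

lemma virPhi_injective : Function.Injective (virPhi L hL) := by
  rw [injective_iff_map_eq_one]
  rintro ⟨u, z⟩ h
  rw [virPhi_mk] at h
  rcases vir_val_cases z with hv | hv
  · have hz : z = 1 := toAdd_eq_zero.mp ((ZMod.val_eq_zero z.toAdd).mp hv)
    have hS1 : virS L hL z = 1 := by
      show (virSig L hL) ^ (z.toAdd.val) = 1
      rw [hv, pow_zero]
    rw [hS1, mul_one] at h
    have happ := congrArg (fun t : lieAutGroup F V => (t : V ≃ₗ[F] V) (L 1)) h
    rw [show ((virD L hL u : lieAutGroup F V) : V ≃ₗ[F] V) = virDe L u from rfl,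
      virDe_apply] at happ
    have h1 : ((u : F) ^ (1 : ℤ)) • L 1 = (1 : F) • L 1 := by
      rw [happ, one_smul]
      rfl
    have hu1 : (u : F) ^ (1 : ℤ) = 1 := (vir_smul_basis L (by simp) h1).2
    have hu : u = 1 := by
      apply Units.ext
      simpa using hu1
    rw [hu, hz]
    rfl
  · exfalso
    have hSs : virS L hL z = virSig L hL := by
      show (virSig L hL) ^ (z.toAdd.val) = _
      rw [hv, pow_one]
    rw [hSs] at h
    have happ := congrArg (fun t : lieAutGroup F V => (t : V ≃ₗ[F] V) (L 1)) h
    rw [show ((virD L hL u * virSig L hL : lieAutGroup F V) : V ≃ₗ[F] V)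
        = virDe L u * virSe L from rfl, vir_mul_apply, virSe_apply, map_neg,
      virDe_apply] at happ
    have h1 : (-((u : F) ^ ((-1 : ℤ)))) • L (-1) = (1 : F) • L 1 := by
      rw [neg_smul, happ, one_smul]
      rfl
    have := (vir_smul_basis L (by simp [u.ne_zero]) h1).1
    norm_num at this

lemma virPhi_surjective : Function.Surjective (virPhi L hL) := by
  rintro ⟨τ, hτ⟩
  have ht : ∀ x y : V, τ ⁅x, y⁆ = ⁅τ x, τ y⁆ := hτ
  obtain ⟨μ, s, hμ, hs, hform⟩ := vir_exists L hL τ ht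
  rcases hs with rfl | rfl
  · refine ⟨⟨Units.mk0 μ hμ, 1⟩, ?_⟩
    rw [virPhi_mk, map_one, mul_one]
    apply Subtype.ext
    apply vir_lequiv_ext L
    intro α
    show virDe L (Units.mk0 μ hμ) (L α) = τ (L α)
    rw [virDe_apply, hform α]
    norm_num
  · refine ⟨⟨(Units.mk0 μ hμ)⁻¹, Multiplicative.ofAdd (1 : ZMod 2)⟩, ?_⟩
    rw [virPhi_mk]
    have hz : virS L hL (Multiplicative.ofAdd (1 : ZMod 2)) = virSig L hL := by
      show (virSig L hL) ^ ((Multiplicative.toAdd (Multiplicative.ofAdd (1 : ZMod 2))).val)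
        = _
      rw [show (Multiplicative.toAdd (Multiplicative.ofAdd (1 : ZMod 2))).val = 1 from rfl,
        pow_one]
    rw [hz]
    apply Subtype.ext
    apply vir_lequiv_ext L
    intro α
    show (virDe L (Units.mk0 μ hμ)⁻¹ * virSe L) (L α) = τ (L α)
    rw [vir_mul_apply, virSe_apply, map_neg, virDe_apply, hform α]
    rw [← neg_smul]
    congr 1
    · have : (((Units.mk0 μ hμ)⁻¹ : Fˣ) : F) = μ⁻¹ := by
        simp
      rw [this, inv_zpow, zpow_neg, inv_inv]
      push_cast
      ring
    · congr 1
      ring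

end Vir6

/-- Proposition 3.1(3). Every Lie algebra automorphism `τ` of the
centerless Virasoro algebra `Vir` has the form `τ (L α) = s • μ^α • L (s·α)` for a uniquely
determined pair `(μ, s)` with `μ ∈ F*` and `s ∈ {1, −1}`; consequently
`Aut(Vir) ≅ F* ⋊ ℤ/2ℤ`, the nontrivial element of `ℤ/2ℤ` acting on `F*` by `μ ↦ μ⁻¹`. -/
theorem aut_virasoro_classification
    {F : Type*} [Field F] [IsAlgClosed F] [CharZero F]
    {V : Type*} [LieRing V] [LieAlgebra F V]
    (L : Module.Basis ℤ F V)
    (hL : ∀ α β : ℤ, ⁅L α, L β⁆ = ((β - α : ℤ) : F) • L (α + β)) :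
    (∀ τ : V ≃ₗ[F] V, τ ∈ lieAutGroup F V →
      ∃! p : F × ℤ, (p.1 ≠ 0 ∧ (p.2 = 1 ∨ p.2 = -1)) ∧
        ∀ α : ℤ, τ (L α) = ((p.2 : F) * p.1 ^ α) • L (p.2 * α)) ∧
      Nonempty ((Fˣ ⋊[invAction F] Multiplicative (ZMod 2)) ≃* lieAutGroup F V) := by
  constructor
  · intro τ hτ
    obtain ⟨μ, s, hμ, hs, hform⟩ := vir_exists L hL τ hτ
    refine ⟨(μ, s), ⟨⟨hμ, hs⟩, hform⟩, ?_⟩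
    rintro ⟨ν, t⟩ ⟨⟨hν, ht⟩, hform'⟩
    have h1 : ((t : F) * ν ^ (1 : ℤ)) • L (t * 1) = ((s : F) * μ ^ (1 : ℤ)) • L (s * 1) :=
      (hform' 1).symm.trans (hform 1)
    have htF : ((t : ℤ) : F) ≠ 0 := by
      rcases ht with rfl | rfl <;> norm_num
    have hsF : ((s : ℤ) : F) ≠ 0 := by
      rcases hs with rfl | rfl <;> norm_num
    have hν1 : ν ^ (1 : ℤ) ≠ 0 := by
      rw [zpow_one]; exact hν
    obtain ⟨hidx, hcoef⟩ := vir_smul_basis L (mul_ne_zero htF hν1) h1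
    have hts : t = s := by omega
    rw [hts] at hcoef
    have hνμ : ν = μ := by
      have := mul_left_cancel₀ hsF hcoef
      rwa [zpow_one, zpow_one] at this
    rw [hts, hνμ]
  · exact ⟨MulEquiv.ofBijective (virPhi L hL)
      ⟨virPhi_injective L hL, virPhi_surjective L hL⟩⟩
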